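/- The minimum distance of the simultaneous multiplicity rational function code SRF_ℓ(M; d_f, d_g) is strictly greater than L − d_f − d_g + 1, where L = deg M. That is, for any two distinct codewords C_1, C_2, the degree of their error locator polynomial exceeds L − d_f − d_g + 1. -/

import Mathlib

open Polynomial

/-- Minimum distance of simultaneous multiplicity rational function codes: for two distinct
codewords given by reduced vectors `f/g` and `f'/g'`, the degree of the error locator polynomial
`Λ = ∏_j (x − α_j)^{λ_j − μ_j}` is strictly greater than `L − d_f − d_g + 1`. -/
theorem srf_min_dist {F : Type*} [Field F] [Fintype F] [DecidableEq F]
    (n ℓ : ℕ) [NeZero ℓ]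
    (α : Fin n → F) (hα : Function.Injective α)
    (lam : Fin n → ℕ) (hlam : ∀ j, 0 < lam j)
    (M : F[X]) (hM : M = ∏ j, (X - C (α j)) ^ lam j)
    (L : ℕ) (hL : L = M.natDegree)
    (df dg : ℕ) (hdf : 0 < df) (hdg : 0 < dg) (hsum : df + dg ≤ L + 1)
    (f f' : Fin ℓ → F[X]) (g g' : F[X]) (hg : g ≠ 0) (hg' : g' ≠ 0)
    (hdegf : ∀ i, (f i).degree < (df : ℕ)) (hdegf' : ∀ i, (f' i).degree < (df : ℕ))
    (hdegg : g.degree < (dg : ℕ)) (hdegg' : g'.degree < (dg : ℕ))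
    (hred : gcd (Finset.univ.gcd f) g = 1) (hred' : gcd (Finset.univ.gcd f') g' = 1)
    (hgM : IsCoprime g M) (hg'M : IsCoprime g' M)
    -- the two codewords differ in some column
    (hne : ∃ i j, ¬ ((X - C (α j)) ^ lam j ∣ (f i * g' - f' i * g)))
    -- μ j is the truncated minimal error index of column j
    (μ : Fin n → ℕ)
    (hμ : ∀ j, μ j = min (lam j) (Finset.univ.inf' Finset.univ_nonempty
        (fun i => if f i * g' - f' i * g = 0 then lam j
          else rootMultiplicity (α j) (f i * g' - f' i * g))))
    (Λ : F[X]) (hΛ : Λ = ∏ j, (X - C (α j)) ^ (lam j - μ j)) :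
    (L : ℤ) - df - dg + 1 < (Λ.natDegree : ℤ) := by
  obtain ⟨i0, j0, hij⟩ := hne
  set φ := f i0 * g' - f' i0 * g with hφdef
  have hφ0 : φ ≠ 0 := fun h => hij (h ▸ dvd_zero _)
  -- natDegree bounds on components
  have hnd : ∀ (p : F[X]) (d : ℕ), 0 < d → p.degree < (d : ℕ) → p.natDegree + 1 ≤ d := by
    intro p d hd hpd
    rcases eq_or_ne p 0 with rfl | hp
    · simp only [natDegree_zero]; omega
    · exact Nat.succ_le_of_lt ((natDegree_lt_iff_degree_lt hp).2 hpd)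
  have hφdeg : φ.natDegree + 2 ≤ df + dg := by
    have h1 : (f i0 * g').natDegree + 2 ≤ df + dg := by
      have := natDegree_mul_le (p := f i0) (q := g')
      have a := hnd _ _ hdf (hdegf i0); have b := hnd _ _ hdg hdegg'
      omega
    have h2 : (f' i0 * g).natDegree + 2 ≤ df + dg := by
      have := natDegree_mul_le (p := f' i0) (q := g)
      have a := hnd _ _ hdf (hdegf' i0); have b := hnd _ _ hdg hdegg
      omega
    have h3 := natDegree_sub_le (f i0 * g') (f' i0 * g)
    rw [← hφdef] at h3
    omega
  have hμlam : ∀ j, μ j ≤ lam j := fun j => (hμ j) ▸ min_le_left _ _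
  have hdvd : ∀ j, (X - C (α j)) ^ μ j ∣ φ := by
    intro j
    have h1 : μ j ≤ rootMultiplicity (α j) φ := by
      rw [hμ j]
      refine le_trans (min_le_right _ _) (le_trans
        (Finset.inf'_le _ (Finset.mem_univ i0)) ?_)
      exact le_of_eq (if_neg hφ0)
    exact dvd_trans (pow_dvd_pow _ h1) (pow_rootMultiplicity_dvd φ (α j))
  have hprod : (∏ j, (X - C (α j)) ^ μ j) ∣ φ := by
    apply Finset.prod_dvd_of_coprime
    · intro a _ b hb hab
      exact (Polynomial.pairwise_coprime_X_sub_C hα hab).pow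
    · intro j _; exact hdvd j
  have hndprod : ∀ (e : Fin n → ℕ),
      (∏ j, (X - C (α j)) ^ e j).natDegree = ∑ j, e j := by
    intro e
    rw [natDegree_prod _ _ (fun j _ => pow_ne_zero _ (X_sub_C_ne_zero _))]
    simp [natDegree_pow]
  have hSμ : ∑ j, μ j ≤ φ.natDegree := by
    have := natDegree_le_of_dvd hprod hφ0
    rwa [hndprod] at this
  have hLsum : L = ∑ j, lam j := by rw [hL, hM, hndprod]
  have hΛnd : Λ.natDegree = ∑ j, (lam j - μ j) := by rw [hΛ, hndprod]
  have hcast : (Λ.natDegree : ℤ) = (L : ℤ) - ∑ j, (μ j : ℤ) := by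
    rw [hΛnd, Nat.cast_sum, hLsum, Nat.cast_sum, ← Finset.sum_sub_distrib]
    exact Finset.sum_congr rfl fun j _ => by
      rw [Nat.cast_sub (hμlam j)]
  have hμint : (∑ j, (μ j : ℤ)) + 2 ≤ (df : ℤ) + dg := by
    have : (∑ j, μ j) + 2 ≤ df + dg := le_trans (by omega) hφdeg
    exact_mod_cast this
  rw [hcast]
  linarith
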